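/- A finite simple graph G has a spanning subgraph in which every connected component is a path on 2 or 3 vertices ({P_2, P_3}-factor) if and only if for every vertex subset S, the number of isolated vertices of G − S is at most 2|S| (Akiyama–Jin–Era theorem). -/

import Mathlib

open SimpleGraph

/-- The number of isolated vertices of a graph. -/
noncomputable def isolatedCount {W : Type*} (H : SimpleGraph W) : ℕ :=
  Nat.card {v : W | ∀ w : W, ¬ H.Adj v w}

set_option linter.unusedSectionVars false
set_option maxHeartbeats 1000000

namespace AJE
open Finset
variable {V : Type*} [Fintype V] [DecidableEq V]

/-- The fiber of a center: its set of leaves. -/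
def fiber (f : V → Option V) (c : V) : Finset V := univ.filter (fun v => f v = some c)

lemma mem_fiber {f : V → Option V} {c v : V} : v ∈ fiber f c ↔ f v = some c := by
  simp [fiber]

def Covered (f : V → Option V) (v : V) : Prop := f v ≠ none ∨ ∃ u, f u = some v

open Classical in
noncomputable def coveredSet (f : V → Option V) : Finset V := univ.filter (Covered f)

lemma mem_coveredSet {f : V → Option V} {v : V} : v ∈ coveredSet f ↔ Covered f v := by
  classical
  simp [coveredSet]

variable (G : SimpleGraph V)

/-- A star forest structure: each leaf points to its center. -/
def Valid (f : V → Option V) : Prop :=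
  (∀ v c, f v = some c → G.Adj c v) ∧
  (∀ v c, f v = some c → f c = none) ∧
  (∀ c, (fiber f c).card ≤ 2)

variable {G}

lemma valid_none : Valid G (fun _ => none) := by
  refine ⟨by simp, by simp, fun c => ?_⟩
  simp [fiber]

lemma not_covered {f : V → Option V} {w : V} (hw : ¬ Covered f w) :
    f w = none ∧ ∀ u, f u ≠ some w := by
  unfold Covered at hw; push_neg at hw; exact hw

/-- Exchange 1: add a new leaf `w` to `c` (center with at most one leaf, not a leaf). -/
lemma exch1 {f : V → Option V} (hF : Valid G f) {c w : V} (hadj : G.Adj c w)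
    (hw : ¬ Covered f w) (hc : f c = none) (hfc : (fiber f c).card ≤ 1) :
    ∃ g : V → Option V, Valid G g ∧ (∀ v, Covered f v → Covered g v) ∧ Covered g w := by
  obtain ⟨hw1, hw2⟩ := not_covered hw
  have hcw : c ≠ w := G.ne_of_adj hadj
  refine ⟨Function.update f w (some c), ⟨?_, ?_, ?_⟩, ?_, ?_⟩
  · intro v d hv
    rcases eq_or_ne v w with rfl | hne
    · rw [Function.update_self] at hv
      obtain rfl := Option.some.inj hv
      exact hadj
    · rw [Function.update_of_ne hne] at hv
      exact hF.1 v d hv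
  · intro v d hv
    have hd : d ≠ w := by
      rcases eq_or_ne v w with rfl | hne
      · rw [Function.update_self] at hv
        obtain rfl := Option.some.inj hv
        exact hcw
      · rw [Function.update_of_ne hne] at hv
        intro h; exact hw2 v (h ▸ hv)
    rw [Function.update_of_ne hd]
    rcases eq_or_ne v w with rfl | hne
    · rw [Function.update_self] at hv
      obtain rfl := Option.some.inj hv
      exact hc
    · rw [Function.update_of_ne hne] at hv
      exact hF.2.1 v d hv
  · intro d
    rcases eq_or_ne d c with rfl | hne
    · have : fiber (Function.update f w (some d)) d ⊆ insert w (fiber f d) := by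
        intro v hv
        rw [mem_fiber] at hv
        rcases eq_or_ne v w with rfl | hne2
        · exact mem_insert_self _ _
        · rw [Function.update_of_ne hne2] at hv
          exact mem_insert_of_mem (mem_fiber.2 hv)
      calc (fiber (Function.update f w (some d)) d).card ≤ (insert w (fiber f d)).card :=
            card_le_card this
        _ ≤ (fiber f d).card + 1 := card_insert_le _ _
        _ ≤ 2 := by omega
    · have : fiber (Function.update f w (some c)) d ⊆ fiber f d := by
        intro v hv
        rw [mem_fiber] at hv
        rcases eq_or_ne v w with rfl | hne2
        · rw [Function.update_self] at hv
          exact absurd (Option.some.inj hv) (Ne.symm hne)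
        · rw [Function.update_of_ne hne2] at hv
          exact mem_fiber.2 hv
      exact le_trans (card_le_card this) (hF.2.2 d)
  · intro v hv
    rcases hv with hv | ⟨u, hu⟩
    · left
      rcases eq_or_ne v w with rfl | hne
      · simp
      · rwa [Function.update_of_ne hne]
    · right
      refine ⟨u, ?_⟩
      have : u ≠ w := by rintro rfl; rw [hw1] at hu; exact nomatch hu
      rwa [Function.update_of_ne this]
  · left; simp


/-- Exchange 2: `x` is the only leaf of `c`; recenter at `x` with leaves `c, w`. -/
lemma exch2 {f : V → Option V} (hF : Valid G f) {c x w : V} (hx : f x = some c)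
    (hfc : fiber f c = {x}) (hadj : G.Adj x w) (hw : ¬ Covered f w) :
    ∃ g : V → Option V, Valid G g ∧ (∀ v, Covered f v → Covered g v) ∧ Covered g w := by
  obtain ⟨hw1, hw2⟩ := not_covered hw
  have hcx : G.Adj c x := hF.1 x c hx
  have hcnone : f c = none := hF.2.1 x c hx
  have hxc : x ≠ c := fun h => by rw [h, hcnone] at hx; exact nomatch hx
  have hcw : c ≠ w := fun h => hw2 x (h ▸ hx)
  have hxw : x ≠ w := G.ne_of_adj hadj
  have hwc : w ≠ c := Ne.symm hcw
  have hwx : w ≠ x := Ne.symm hxw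
  -- key: only x maps to c
  have honly : ∀ v, f v = some c → v = x := by
    intro v hv
    have : v ∈ fiber f c := mem_fiber.2 hv
    rw [hfc, mem_singleton] at this; exact this
  -- nobody maps to x, w
  have hnox : ∀ v, f v ≠ some x := by
    intro v hv
    have := hF.2.1 v x hv; rw [hx] at this; exact nomatch this
  refine ⟨fun v => if v = c then some x else if v = w then some x else
      if v = x then none else f v, ⟨?_, ?_, ?_⟩, ?_, ?_⟩
  · intro v d hv
    dsimp only at hv
    split_ifs at hv with h1 h2 h3
    · obtain rfl := Option.some.inj hv; subst h1; exact hcx.symm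
    · obtain rfl := Option.some.inj hv; subst h2; exact hadj
    · exact hF.1 v d hv
  · intro v d hv
    dsimp only at hv ⊢
    split_ifs at hv with h1 h2 h3
    · obtain rfl := Option.some.inj hv
      rw [if_neg hxc, if_neg hxw, if_pos rfl]
    · obtain rfl := Option.some.inj hv
      rw [if_neg hxc, if_neg hxw, if_pos rfl]
    · have hdc : d ≠ c := fun h => h3 (honly v (h ▸ hv))
      have hdw : d ≠ w := fun h => hw2 v (h ▸ hv)
      have hdx : d ≠ x := fun h => hnox v (h ▸ hv)
      rw [if_neg hdc, if_neg hdw, if_neg hdx]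
      exact hF.2.1 v d hv
  · intro d
    dsimp only [fiber]
    rcases eq_or_ne d x with rfl | hne
    · refine le_trans (card_le_card (fun v hv => ?_)) (card_insert_le c {w} |>.trans (by simp))
      simp only [mem_filter, mem_univ, true_and] at hv
      split_ifs at hv with h1 h2 h3
      · simp [h1]
      · simp [h2]
      · exact absurd hv (hnox v)
    · refine le_trans (card_le_card (fun v hv => ?_)) (hF.2.2 d)
      simp only [mem_filter, mem_univ, true_and] at hv
      split_ifs at hv with h1 h2 h3
      · exact absurd (Option.some.inj hv) (Ne.symm hne)
      · exact absurd (Option.some.inj hv) (Ne.symm hne)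
      · exact mem_fiber.2 hv
  · intro v hv
    dsimp only [Covered] at hv ⊢
    rcases hv with hv | ⟨u, hu⟩
    · rcases eq_or_ne v c with rfl | h1
      · left; simp
      · rcases eq_or_ne v w with rfl | h2
        · exact absurd hw1 hv
        · rcases eq_or_ne v x with rfl | h3
          · right; exact ⟨c, by simp⟩
          · left; simpa [h1, h2, h3] using hv
    · rcases eq_or_ne u c with rfl | h1
      · rw [hcnone] at hu; exact nomatch hu
      · rcases eq_or_ne u w with rfl | h2
        · rw [hw1] at hu; exact nomatch hu
        · rcases eq_or_ne u x with rfl | h3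
          · obtain rfl := Option.some.inj (hx ▸ hu)
            left; simp
          · right; exact ⟨u, by simpa [h1, h2, h3] using hu⟩
  · left; simp [hwc]

/-- Exchange 3: `x` is a leaf of `c` which has another leaf `y`; split off `x` with `w`. -/
lemma exch3 {f : V → Option V} (hF : Valid G f) {c x y w : V} (hx : f x = some c)
    (hy : f y = some c) (hyx : y ≠ x) (hadj : G.Adj x w) (hw : ¬ Covered f w) :
    ∃ g : V → Option V, Valid G g ∧ (∀ v, Covered f v → Covered g v) ∧ Covered g w := by
  obtain ⟨hw1, hw2⟩ := not_covered hw
  have hcnone : f c = none := hF.2.1 x c hx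
  have hxw : x ≠ w := G.ne_of_adj hadj
  have hwx : w ≠ x := Ne.symm hxw
  have hyw : y ≠ w := fun h => by rw [h, hw1] at hy; exact nomatch hy
  have hnox : ∀ v, f v ≠ some x := by
    intro v hv
    have := hF.2.1 v x hv; rw [hx] at this; exact nomatch this
  refine ⟨fun v => if v = x then none else if v = w then some x else f v,
    ⟨?_, ?_, ?_⟩, ?_, ?_⟩
  · intro v d hv
    dsimp only at hv
    split_ifs at hv with h1 h2
    · obtain rfl := Option.some.inj hv; subst h2; exact hadj
    · exact hF.1 v d hv
  · intro v d hv
    dsimp only at hv ⊢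
    split_ifs at hv with h1 h2
    · obtain rfl := Option.some.inj hv; rw [if_pos rfl]
    · have hdx : d ≠ x := fun h => hnox v (h ▸ hv)
      have hdw : d ≠ w := fun h => hw2 v (h ▸ hv)
      rw [if_neg hdx, if_neg hdw]
      exact hF.2.1 v d hv
  · intro d
    dsimp only [fiber]
    rcases eq_or_ne d x with rfl | hne
    · refine le_trans (card_le_card (fun v hv => ?_)) (by simp : ({w} : Finset V).card ≤ 2)
      simp only [mem_filter, mem_univ, true_and] at hv
      split_ifs at hv with h1 h2
      · simp [h2]
      · exact absurd hv (hnox v)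
    · refine le_trans (card_le_card (fun v hv => ?_)) (hF.2.2 d)
      simp only [mem_filter, mem_univ, true_and] at hv
      split_ifs at hv with h1 h2
      · exact absurd (Option.some.inj hv) (Ne.symm hne)
      · exact mem_fiber.2 hv
  · intro v hv
    dsimp only [Covered] at hv ⊢
    rcases hv with hv | ⟨u, hu⟩
    · rcases eq_or_ne v x with rfl | h1
      · right; exact ⟨w, by simp [hwx]⟩
      · rcases eq_or_ne v w with rfl | h2
        · exact absurd hw1 hv
        · left; simpa [h1, h2] using hv
    · rcases eq_or_ne u x with rfl | h1
      · obtain rfl := Option.some.inj (hx ▸ hu)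
        right; exact ⟨y, by simpa [hyx, hyw] using hy⟩
      · rcases eq_or_ne u w with rfl | h2
        · rw [hw1] at hu; exact nomatch hu
        · right; exact ⟨u, by simpa [h1, h2] using hu⟩
  · left; simp [hwx]


/-- Every neighbour of an uncovered vertex is a center with two leaves. -/
lemma claimA {f : V → Option V} (hF : Valid G f)
    (hmax : ∀ g, Valid G g → (coveredSet g).card ≤ (coveredSet f).card)
    {w x : V} (hw : ¬ Covered f w) (hxw : G.Adj x w) :
    f x = none ∧ (fiber f x).card = 2 := by
  have key : ¬ ∃ g, Valid G g ∧ (∀ v, Covered f v → Covered g v) ∧ Covered g w := by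
    rintro ⟨g, hg, hsub, hgw⟩
    have hsub' : coveredSet f ⊆ coveredSet g := fun v hv =>
      mem_coveredSet.2 (hsub v (mem_coveredSet.1 hv))
    have hlt : (coveredSet f).card < (coveredSet g).card :=
      card_lt_card ⟨hsub', fun h => hw (mem_coveredSet.1 (h (mem_coveredSet.2 hgw)))⟩
    exact absurd (hmax g hg) (not_le.2 hlt)
  cases hfx : f x with
  | some c =>
    exfalso
    have h1 : x ∈ fiber f c := mem_fiber.2 hfx
    rcases le_or_gt (fiber f c).card 1 with hle | hgt
    · have : fiber f c = {x} := by
        apply Finset.eq_singleton_iff_unique_mem.2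
        refine ⟨h1, fun y hy => ?_⟩
        by_contra hne
        have : 1 < (fiber f c).card := Finset.one_lt_card.2 ⟨y, hy, x, h1, hne⟩
        omega
      exact key (exch2 hF hfx this hxw hw)
    · obtain ⟨y, hy1, hy2⟩ : ∃ y, y ∈ fiber f c ∧ y ≠ x := by
        have : (fiber f c).erase x |>.Nonempty := by
          rw [← Finset.card_pos, Finset.card_erase_of_mem h1]; omega
        obtain ⟨y, hy⟩ := this
        exact ⟨y, Finset.mem_of_mem_erase hy, Finset.ne_of_mem_erase hy⟩
      exact key (exch3 hF hfx (mem_fiber.1 hy1) hy2 hxw hw)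
  | none =>
    rcases le_or_gt (fiber f x).card 1 with hle | hgt
    · exact absurd (exch1 hF hxw hw hfx hle) key
    · exact ⟨rfl, le_antisymm (hF.2.2 x) hgt⟩

/-- swap operation: center `c` trades leaf `ℓ` for the uncovered vertex `w`. -/
def swapf (f : V → Option V) (c ℓ w : V) : V → Option V :=
  fun v => if v = ℓ then none else if v = w then some c else f v

lemma swapf_props {f : V → Option V} (hF : Valid G f) {c ℓ w : V}
    (hl : f ℓ = some c) (hw : ¬ Covered f w) (hadj : G.Adj c w) :
    Valid G (swapf f c ℓ w) ∧
      coveredSet (swapf f c ℓ w) = insert w ((coveredSet f).erase ℓ) ∧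
      (∀ d, (fiber (swapf f c ℓ w) d).card = (fiber f d).card) ∧
      ¬ Covered (swapf f c ℓ w) ℓ := by
  obtain ⟨hw1, hw2⟩ := not_covered hw
  have hcnone : f c = none := hF.2.1 ℓ c hl
  have hcl : c ≠ ℓ := by
    intro h; rw [h] at hcnone; rw [hcnone] at hl; exact nomatch hl
  have hcw : c ≠ w := fun h => hw2 ℓ (h ▸ hl)
  have hlw : ℓ ≠ w := fun h => by rw [h, hw1] at hl; exact nomatch hl
  have hnol : ∀ v, f v ≠ some ℓ := by
    intro v hv
    have := hF.2.1 v ℓ hv; rw [hl] at this; exact nomatch this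
  have gl : swapf f c ℓ w ℓ = none := by simp [swapf]
  have gw : swapf f c ℓ w w = some c := by simp [swapf, Ne.symm hlw]
  have gother : ∀ v, v ≠ ℓ → v ≠ w → swapf f c ℓ w v = f v := by
    intro v h1 h2; simp [swapf, h1, h2]
  have hfib : ∀ d, d ≠ c → fiber (swapf f c ℓ w) d = fiber f d := by
    intro d hd
    ext v
    simp only [mem_fiber]
    rcases eq_or_ne v ℓ with rfl | h1
    · rw [gl, hl]
      constructor
      · intro h; exact nomatch h
      · intro h; exact absurd (Option.some.inj h).symm hd
    · rcases eq_or_ne v w with rfl | h2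
      · rw [gw, hw1]
        constructor
        · intro h; exact absurd (Option.some.inj h).symm hd
        · intro h; exact nomatch h
      · rw [gother v h1 h2]
  have hfibc : fiber (swapf f c ℓ w) c = insert w ((fiber f c).erase ℓ) := by
    ext v
    simp only [mem_fiber, Finset.mem_insert, Finset.mem_erase]
    rcases eq_or_ne v w with rfl | h2
    · simp [gw]
    · rcases eq_or_ne v ℓ with rfl | h1
      · rw [gl]
        constructor
        · intro h; exact nomatch h
        · rintro (h | ⟨h, -⟩)
          · exact absurd h hlw
          · exact absurd rfl h
      · rw [gother v h1 h2]
        constructor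
        · intro h; exact Or.inr ⟨h1, h⟩
        · rintro (h | ⟨-, h⟩)
          · exact absurd h h2
          · exact h
  have hlmem : ℓ ∈ fiber f c := mem_fiber.2 hl
  have hwnot : w ∉ (fiber f c).erase ℓ := by
    intro h
    have := mem_fiber.1 (Finset.mem_of_mem_erase h)
    rw [hw1] at this; exact nomatch this
  have hfibcard : ∀ d, (fiber (swapf f c ℓ w) d).card = (fiber f d).card := by
    intro d
    rcases eq_or_ne d c with rfl | hd
    · rw [hfibc, Finset.card_insert_of_notMem hwnot, Finset.card_erase_of_mem hlmem]
      have : 1 ≤ (fiber f d).card := Finset.card_pos.2 ⟨ℓ, hlmem⟩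
      omega
    · rw [hfib d hd]
  have hvalid : Valid G (swapf f c ℓ w) := by
    refine ⟨?_, ?_, ?_⟩
    · intro v d hv
      rcases eq_or_ne v ℓ with rfl | h1
      · rw [gl] at hv; exact nomatch hv
      · rcases eq_or_ne v w with rfl | h2
        · rw [gw] at hv
          have : d = c := (Option.some.inj hv).symm
          subst this; exact hadj
        · rw [gother v h1 h2] at hv; exact hF.1 v d hv
    · intro v d hv
      rcases eq_or_ne v ℓ with rfl | h1
      · rw [gl] at hv; exact nomatch hv
      · rcases eq_or_ne v w with rfl | h2
        · rw [gw] at hv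
          have : d = c := (Option.some.inj hv).symm
          subst this
          rw [gother d hcl hcw]; exact hcnone
        · rw [gother v h1 h2] at hv
          have hd1 : d ≠ ℓ := fun h => hnol v (h ▸ hv)
          have hd2 : d ≠ w := fun h => hw2 v (h ▸ hv)
          rw [gother d hd1 hd2]; exact hF.2.1 v d hv
    · intro d; rw [hfibcard d]; exact hF.2.2 d
  have hlnc : ¬ Covered (swapf f c ℓ w) ℓ := by
    rintro (h | ⟨u, hu⟩)
    · exact h gl
    · rcases eq_or_ne u ℓ with rfl | h1
      · rw [gl] at hu; exact nomatch hu
      · rcases eq_or_ne u w with rfl | h2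
        · rw [gw] at hu; exact hcl (Option.some.inj hu)
        · rw [gother u h1 h2] at hu; exact hnol u hu
  refine ⟨hvalid, ?_, hfibcard, hlnc⟩
  ext v
  rw [mem_coveredSet, Finset.mem_insert, Finset.mem_erase, mem_coveredSet]
  rcases eq_or_ne v w with rfl | h2
  · simp only [eq_self_iff_true, true_or, iff_true]
    exact Or.inl (by rw [gw]; exact fun h => nomatch h)
  · rcases eq_or_ne v ℓ with rfl | h1
    · constructor
      · intro h; exact absurd h hlnc
      · rintro (h | ⟨h, -⟩)
        · exact absurd h hlw
        · exact absurd rfl h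
    · constructor
      · rintro (h | ⟨u, hu⟩)
        · rw [gother v h1 h2] at h; exact Or.inr ⟨h1, Or.inl h⟩
        · rcases eq_or_ne u ℓ with rfl | hu1
          · rw [gl] at hu; exact nomatch hu
          · rcases eq_or_ne u w with rfl | hu2
            · rw [gw] at hu
              have : c = v := Option.some.inj hu
              subst this
              exact Or.inr ⟨h1, Or.inr ⟨ℓ, hl⟩⟩
            · rw [gother u hu1 hu2] at hu
              exact Or.inr ⟨h1, Or.inr ⟨u, hu⟩⟩
      · rintro (h | ⟨-, h | ⟨u, hu⟩⟩)
        · exact absurd h h2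
        · exact Or.inl (by rw [gother v h1 h2]; exact h)
        · rcases eq_or_ne u ℓ with rfl | hu1
          · rw [hl] at hu; obtain rfl := Option.some.inj hu
            exact Or.inr ⟨w, gw⟩
          · rcases eq_or_ne u w with rfl | hu2
            · rw [hw1] at hu; exact nomatch hu
            · exact Or.inr ⟨u, by rw [gother u hu1 hu2]; exact hu⟩


section Reach
variable (G)
inductive Reach (f0 : V → Option V) : (V → Option V) → Prop
  | refl : Reach f0 f0
  | swap {f : V → Option V} {c ℓ w : V} : Reach f0 f → f ℓ = some c → ¬ Covered f w →
      G.Adj c w → Reach f0 (swapf f c ℓ w)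
end Reach

lemma reach_invariant {f0 f : V → Option V} (hF0 : Valid G f0) (h : Reach G f0 f) :
    Valid G f ∧ (∀ d, (fiber f d).card = (fiber f0 d).card) ∧
      (coveredSet f).card = (coveredSet f0).card := by
  induction h with
  | refl => exact ⟨hF0, fun _ => rfl, rfl⟩
  | @swap f c ℓ w hR hl hw hadj ih =>
    obtain ⟨hv, hcov, hfib, -⟩ := swapf_props ih.1 hl hw hadj
    refine ⟨hv, fun d => (hfib d).trans (ih.2.1 d), ?_⟩
    rw [hcov]
    have hlmem : ℓ ∈ coveredSet f := mem_coveredSet.2 (Or.inl (by rw [hl]; simp))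
    have hwmem : w ∉ (coveredSet f).erase ℓ := fun h =>
      hw (mem_coveredSet.1 (Finset.mem_of_mem_erase h))
    rw [Finset.card_insert_of_notMem hwmem, Finset.card_erase_of_mem hlmem]
    have : 1 ≤ (coveredSet f).card := Finset.card_pos.2 ⟨ℓ, hlmem⟩
    omega

def Exposed (G : SimpleGraph V) (f0 : V → Option V) (v : V) : Prop :=
  ∃ f, Reach G f0 f ∧ ¬ Covered f v

/-- The main covering lemma: the isolated-vertices condition implies a spanning star forest. -/
theorem cover_all
    (h : ∀ S T : Finset V, (∀ t ∈ T, t ∉ S ∧ ∀ y, G.Adj t y → y ∈ S) → T.card ≤ 2 * S.card) :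
    ∃ f : V → Option V, Valid G f ∧ ∀ v, Covered f v := by
  classical
  obtain ⟨f0, hmem, hmax⟩ := Finset.exists_max_image
    ((Finset.univ : Finset (V → Option V)).filter (Valid G))
    (fun g => (coveredSet g).card) ⟨(fun _ => none), by simp [valid_none]⟩
  rw [Finset.mem_filter] at hmem
  have hf0v : Valid G f0 := hmem.2
  have hmax' : ∀ g, Valid G g → (coveredSet g).card ≤ (coveredSet f0).card := by
    intro g hg
    exact hmax g (Finset.mem_filter.2 ⟨Finset.mem_univ g, hg⟩)
  refine ⟨f0, hf0v, ?_⟩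
  by_contra hunc
  push_neg at hunc
  obtain ⟨u0, hu0⟩ := hunc
  set S : Finset V := univ.filter (fun x => ∃ w, Exposed G f0 w ∧ G.Adj x w) with hS
  set T : Finset V := univ.filter (Exposed G f0) with hT
  have hinv := fun {f} (hf : Reach G f0 f) => reach_invariant hf0v hf
  have hmaxr : ∀ {f}, Reach G f0 f → ∀ g, Valid G g →
      (coveredSet g).card ≤ (coveredSet f).card := by
    intro f hf g hg
    rw [(hinv hf).2.2]; exact hmax' g hg
  have hA : ∀ {f}, Reach G f0 f → ∀ {w x}, ¬ Covered f w → G.Adj x w →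
      f x = none ∧ (fiber f x).card = 2 := by
    intro f hf w x hw hxw
    exact claimA (hinv hf).1 (hmaxr hf) hw hxw
  -- membership in S gives two leaves in f0
  have hSfib : ∀ x ∈ S, (fiber f0 x).card = 2 := by
    intro x hx
    rw [hS, Finset.mem_filter] at hx
    obtain ⟨-, w, ⟨f, hf, hfw⟩, hadj⟩ := hx
    have h2 := (hA hf hfw hadj).2
    rwa [(hinv hf).2.1 x] at h2
  -- Claim B : leaves (in f0) of S-centers are exposed
  have hB : ∀ x ∈ S, ∀ ℓ, f0 ℓ = some x → Exposed G f0 ℓ := by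
    intro x hx ℓ hℓ
    rw [hS, Finset.mem_filter] at hx
    obtain ⟨-, w, ⟨f1, hf1, hf1w⟩, hadj⟩ := hx
    -- step 1 : every f1-leaf of x is exposed
    have step1 : ∀ m, f1 m = some x → Exposed G f0 m := by
      intro m hm
      exact ⟨swapf f1 x m w, Reach.swap hf1 hm hf1w hadj,
        (swapf_props (hinv hf1).1 hm hf1w hadj).2.2.2⟩
    -- step 2 : transfer back to f0
    have step2 : ∀ {f}, Reach G f0 f → (∀ m, f m = some x → Exposed G f0 m) →
        ∀ m, f0 m = some x → Exposed G f0 m := by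
      intro f hf
      induction hf with
      | refl => exact fun h => h
      | @swap g c ℓ0 w0 hR hl0 hw0 hadj0 ih =>
        intro hP
        apply ih
        intro m hm
        rcases eq_or_ne m ℓ0 with rfl | h1
        · exact ⟨swapf g c m w0, Reach.swap hR hl0 hw0 hadj0,
            (swapf_props (hinv hR).1 hl0 hw0 hadj0).2.2.2⟩
        · have hm2 : m ≠ w0 := by
            intro h
            subst h
            rcases (fun hwc => hw0 hwc : ¬ Covered g m) with -
            exact hw0 (Or.inl (by rw [hm]; simp))
          apply hP
          unfold swapf
          rw [if_neg h1, if_neg hm2]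
          exact hm
    exact step2 hf1 step1 ℓ hℓ
  -- T and S satisfy the hypothesis of h
  have hTS : ∀ t ∈ T, t ∉ S ∧ ∀ y, G.Adj t y → y ∈ S := by
    intro t ht
    rw [hT, Finset.mem_filter] at ht
    obtain ⟨-, f, hf, hfnc⟩ := ht
    constructor
    · intro htS
      have h2 : (fiber f t).card = 2 := by
        rw [(hinv hf).2.1 t]; exact hSfib t htS
      have : (fiber f t).Nonempty := by
        rw [← Finset.card_pos, h2]; omega
      obtain ⟨u, hu⟩ := this
      exact hfnc (Or.inr ⟨u, mem_fiber.1 hu⟩)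
    · intro y hy
      rw [hS, Finset.mem_filter]
      exact ⟨Finset.mem_univ y, t, ⟨f, hf, hfnc⟩, hy.symm⟩
  have hcard : T.card ≤ 2 * S.card := h S T hTS
  -- lower bound on T.card
  set L : Finset V := S.biUnion (fiber f0) with hL
  have hLT : L ⊆ T := by
    intro ℓ hℓ
    rw [hL, Finset.mem_biUnion] at hℓ
    obtain ⟨x, hx, hfx⟩ := hℓ
    rw [hT, Finset.mem_filter]
    exact ⟨Finset.mem_univ ℓ, hB x hx ℓ (mem_fiber.1 hfx)⟩
  have hu0T : u0 ∈ T := by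
    rw [hT, Finset.mem_filter]
    exact ⟨Finset.mem_univ u0, f0, Reach.refl, hu0⟩
  have hu0L : u0 ∉ L := by
    intro hmem
    rw [hL, Finset.mem_biUnion] at hmem
    obtain ⟨x, -, hfx⟩ := hmem
    exact hu0 (Or.inl (by rw [mem_fiber.1 hfx]; simp))
  have hLcard : L.card = 2 * S.card := by
    rw [hL, Finset.card_biUnion]
    · rw [Finset.sum_congr rfl (fun x hx => hSfib x hx), Finset.sum_const, smul_eq_mul,
        mul_comm]
    · intro x hx y hy hxy
      simp only [Finset.disjoint_left]
      intro a ha hb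
      rw [mem_fiber] at ha hb
      rw [ha] at hb
      exact hxy (Option.some.inj hb)
  have : insert u0 L ⊆ T := Finset.insert_subset hu0T hLT
  have hTlarge : 2 * S.card + 1 ≤ T.card := by
    have := Finset.card_le_card this
    rw [Finset.card_insert_of_notMem hu0L, hLcard] at this
    omega
  omega


/-- sets closed under adjacency are closed under reachability -/
lemma mem_of_reachable {W : Type*} {Γ : SimpleGraph W} {A : Set W}
    (hcl : ∀ a ∈ A, ∀ b, Γ.Adj a b → b ∈ A) {a b : W} (h : Γ.Reachable a b) :
    a ∈ A → b ∈ A := by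
  obtain ⟨p⟩ := h
  induction p with
  | nil => exact id
  | cons h p ih => exact fun ha => ih (hcl _ ha _ h)

lemma supp_eq_of {W : Type*} {Γ : SimpleGraph W} {A : Set W}
    (hcl : ∀ a ∈ A, ∀ b, Γ.Adj a b → b ∈ A)
    (hconn : ∀ a ∈ A, ∀ b ∈ A, Γ.Reachable a b) {v : W} (hv : v ∈ A) :
    (Γ.connectedComponentMk v).supp = A := by
  ext w
  rw [ConnectedComponent.mem_supp_iff]
  constructor
  · intro h
    exact mem_of_reachable hcl (ConnectedComponent.eq.1 h).symm hv
  · intro hw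
    exact ConnectedComponent.eq.2 (hconn w hw v hv)

/-- the star-forest subgraph associated to `f` -/
def starSub (G : SimpleGraph V) (f : V → Option V) (hF : Valid G f) : G.Subgraph where
  verts := Set.univ
  Adj a b := f b = some a ∨ f a = some b
  adj_sub := by rintro a b (h | h); exacts [hF.1 b a h, (hF.1 a b h).symm]
  edge_vert := fun _ => Set.mem_univ _
  symm := ⟨fun a b h => Or.symm h⟩

theorem exists_factor {f : V → Option V} (hF : Valid G f) (hcov : ∀ v, Covered f v) :
    ∃ H : G.Subgraph, H.IsSpanning ∧
      ∀ c : H.coe.ConnectedComponent,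
        Nonempty ((H.coe.induce c.supp) ≃g pathGraph 2) ∨
        Nonempty ((H.coe.induce c.supp) ≃g pathGraph 3) := by
  classical
  set H : G.Subgraph := starSub G f hF with hH
  have hadjH : ∀ a b : ↥H.verts, H.coe.Adj a b ↔ (f ↑b = some ↑a ∨ f ↑a = some ↑b) := by
    intro a b; rfl
  have hadj' : ∀ a b : V, H.Adj a b ↔ (f b = some a ∨ f a = some b) := fun a b => Iff.rfl
  refine ⟨H, fun v => Set.mem_univ v, ?_⟩
  intro c
  obtain ⟨v, rfl⟩ := c.exists_rep
  -- find the center of v's star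
  obtain ⟨c0, u0, hu0, hv0⟩ : ∃ c0 u0, f u0 = some c0 ∧ (f ↑v = some c0 ∨ ↑v = c0) := by
    rcases hcov ↑v with hv | ⟨u, hu⟩
    · obtain ⟨c0, hfv⟩ := Option.ne_none_iff_exists'.1 hv
      exact ⟨c0, ↑v, hfv, Or.inl hfv⟩
    · exact ⟨↑v, u, hu, Or.inr rfl⟩
  have hc0none : f c0 = none := hF.2.1 u0 c0 hu0
  -- the star of c0 as a set of vertices of H
  set A : Set ↥H.verts := {x | f ↑x = some c0 ∨ ↑x = c0} with hA
  have hvA : v ∈ A := hv0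
  have hcl : ∀ a ∈ A, ∀ b, H.coe.Adj a b → b ∈ A := by
    intro a ha b hab
    rw [hadjH] at hab
    rcases ha with ha | ha
    · rcases hab with hab | hab
      · exfalso
        have := hF.2.1 ↑b ↑a hab
        rw [ha] at this; exact nomatch this
      · right
        exact (Option.some.inj (ha.symm.trans hab)).symm
    · rcases hab with hab | hab
      · left; rw [ha] at hab; exact hab
      · exfalso; rw [ha, hc0none] at hab; exact nomatch hab
  have hcenter : (⟨c0, Set.mem_univ c0⟩ : ↥H.verts) ∈ A := Or.inr rfl
  have hreach : ∀ a ∈ A, H.coe.Reachable a ⟨c0, Set.mem_univ c0⟩ := by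
    intro a ha
    rcases ha with ha | ha
    · have : H.coe.Adj a ⟨c0, Set.mem_univ c0⟩ := by
        rw [hadjH]; right; exact ha
      exact this.reachable
    · have : a = (⟨c0, Set.mem_univ c0⟩ : ↥H.verts) := Subtype.ext ha
      rw [this]
  have hconn : ∀ a ∈ A, ∀ b ∈ A, H.coe.Reachable a b := fun a ha b hb =>
    (hreach a ha).trans (hreach b hb).symm
  have hsupp : ConnectedComponent.supp (Quot.mk H.coe.Reachable v) = A :=
    supp_eq_of hcl hconn hvA
  rw [hsupp]
  -- facts about the fiber of c0
  have hu0mem : u0 ∈ fiber f c0 := mem_fiber.2 hu0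
  have h1le : 1 ≤ (fiber f c0).card := Finset.card_pos.2 ⟨u0, hu0mem⟩
  have hle2 : (fiber f c0).card ≤ 2 := hF.2.2 c0
  have hnoleaf : ∀ a b : V, f a = some c0 → f b = some a → False := by
    intro a b ha hb
    have := hF.2.1 b a hb
    rw [ha] at this; exact nomatch this
  rcases eq_or_lt_of_le h1le with h1 | h2
  · -- exactly one leaf : P2
    left
    obtain ⟨l, hl⟩ := Finset.card_eq_one.1 h1.symm
    have hlf : f l = some c0 := mem_fiber.1 (hl ▸ Finset.mem_singleton_self l)
    have hlc : l ≠ c0 := (hF.1 l c0 hlf).ne'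
    have honly : ∀ x, f x = some c0 → x = l := by
      intro x hx
      have : x ∈ fiber f c0 := mem_fiber.2 hx
      rwa [hl, Finset.mem_singleton] at this
    set e : Fin 2 → ↥A := ![⟨⟨c0, Set.mem_univ c0⟩, Or.inr rfl⟩, ⟨⟨l, Set.mem_univ l⟩, Or.inl hlf⟩]
      with he
    have hbij : Function.Bijective e := by
      constructor
      · intro i j hij
        rw [Subtype.ext_iff, Subtype.ext_iff] at hij
        fin_cases i <;> fin_cases j <;>
            simp only [he, Fin.mk_zero, Fin.mk_one, Matrix.cons_val_zero, Matrix.cons_val_one,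
              Matrix.head_cons] at hij ⊢ <;>
          first
          | rfl
          | exact absurd hij (Ne.symm hlc)
          | exact absurd hij hlc
      · rintro ⟨⟨x, hx⟩, hxA⟩
        rcases hxA with hxA | hxA
        · refine ⟨1, ?_⟩
          apply Subtype.ext; apply Subtype.ext
          simp only [he, Fin.mk_one, Matrix.cons_val_one, Matrix.head_cons]
          exact (honly x hxA).symm
        · refine ⟨0, ?_⟩
          apply Subtype.ext; apply Subtype.ext
          simp only [he, Fin.mk_zero, Matrix.cons_val_zero]
          exact hxA.symm
    refine ⟨(⟨Equiv.ofBijective e hbij, ?_⟩ : pathGraph 2 ≃g H.coe.induce A).symm⟩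
    intro i j
    fin_cases i <;> fin_cases j <;>
      simp [he, comap_adj, Subgraph.coe_adj, pathGraph_adj, hlf, hc0none, hlc, Ne.symm hlc, hadj',
        Equiv.ofBijective]
  · -- two leaves : P3
    right
    have h2' : (fiber f c0).card = 2 := le_antisymm hle2 h2
    obtain ⟨l1, l2, hl12, hl⟩ := Finset.card_eq_two.1 h2'
    have hlf1 : f l1 = some c0 := mem_fiber.1 (hl ▸ by simp)
    have hlf2 : f l2 = some c0 := mem_fiber.1 (hl ▸ by simp)
    have hlc1 : l1 ≠ c0 := (hF.1 l1 c0 hlf1).ne'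
    have hlc2 : l2 ≠ c0 := (hF.1 l2 c0 hlf2).ne'
    have honly : ∀ x, f x = some c0 → x = l1 ∨ x = l2 := by
      intro x hx
      have : x ∈ fiber f c0 := mem_fiber.2 hx
      rw [hl] at this
      simpa using this
    have hn12 : f l1 ≠ some l2 := fun h => hnoleaf l2 l1 hlf2 h
    have hn21 : f l2 ≠ some l1 := fun h => hnoleaf l1 l2 hlf1 h
    set e : Fin 3 → ↥A := ![⟨⟨l1, Set.mem_univ l1⟩, Or.inl hlf1⟩,
      ⟨⟨c0, Set.mem_univ c0⟩, Or.inr rfl⟩, ⟨⟨l2, Set.mem_univ l2⟩, Or.inl hlf2⟩] with he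
    have hbij : Function.Bijective e := by
      constructor
      · intro i j hij
        rw [Subtype.ext_iff, Subtype.ext_iff] at hij
        fin_cases i <;> fin_cases j <;>
            simp only [he, Fin.mk_zero, Fin.mk_one, Matrix.cons_val_zero, Matrix.cons_val_one,
              Matrix.head_cons, Matrix.cons_val_two, Matrix.tail_cons] at hij ⊢ <;>
          first
          | rfl
          | exact absurd hij hlc1
          | exact absurd hij (Ne.symm hlc1)
          | exact absurd hij hlc2
          | exact absurd hij (Ne.symm hlc2)
          | exact absurd hij hl12
          | exact absurd hij (Ne.symm hl12)
      · rintro ⟨⟨x, hx⟩, hxA⟩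
        rcases hxA with hxA | hxA
        · rcases honly x hxA with rfl | rfl
          · refine ⟨0, ?_⟩
            apply Subtype.ext; apply Subtype.ext
            simp only [he, Fin.mk_zero, Matrix.cons_val_zero]
          · refine ⟨2, ?_⟩
            apply Subtype.ext; apply Subtype.ext
            simp only [he, Matrix.cons_val_two, Matrix.tail_cons, Matrix.head_cons]
        · refine ⟨1, ?_⟩
          apply Subtype.ext; apply Subtype.ext
          simp only [he, Fin.mk_one, Matrix.cons_val_one, Matrix.head_cons]
          exact hxA.symm
    refine ⟨(⟨Equiv.ofBijective e hbij, ?_⟩ : pathGraph 3 ≃g H.coe.induce A).symm⟩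
    intro i j
    fin_cases i <;> fin_cases j <;>
      simp [he, comap_adj, Subgraph.coe_adj, pathGraph_adj, hlf1, hlf2, hc0none,
        hlc1, hlc2, Ne.symm hlc1, Ne.symm hlc2, hn12, hn21, hl12, hl12.symm, hadj', Equiv.ofBijective]

lemma path_card (n : ℕ) (hn : n = 2 ∨ n = 3) (i : Fin n) :
    Nat.card {j : Fin n // (pathGraph n).Adj i j} ≤ 2 := by
  have h1 : Nat.card {j : Fin n // (pathGraph n).Adj i j}
      = Nat.card {j : Fin n // (i : ℕ) + 1 = (j : ℕ) ∨ (j : ℕ) + 1 = (i : ℕ)} :=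
    Nat.card_congr (Equiv.subtypeEquivRight (fun j => pathGraph_adj))
  rw [h1, Nat.card_eq_fintype_card, Fintype.card_subtype]
  rcases hn with rfl | rfl
  · exact (by decide : ∀ k : Fin 2,
      (univ.filter (fun x : Fin 2 => (k : ℕ) + 1 = (x : ℕ) ∨ (x : ℕ) + 1 = (k : ℕ))).card ≤ 2) i
  · exact (by decide : ∀ k : Fin 3,
      (univ.filter (fun x : Fin 3 => (k : ℕ) + 1 = (x : ℕ) ∨ (x : ℕ) + 1 = (k : ℕ))).card ≤ 2) i

lemma path_nbr (n : ℕ) (hn : n = 2 ∨ n = 3) (i : Fin n) :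
    ∃ j, (pathGraph n).Adj i j := by
  have : ∃ j : Fin n, (i : ℕ) + 1 = (j : ℕ) ∨ (j : ℕ) + 1 = (i : ℕ) := by
    rcases hn with rfl | rfl
    · revert i; decide
    · revert i; decide
  obtain ⟨j, hj⟩ := this
  exact ⟨j, pathGraph_adj.2 hj⟩

theorem forward {H : G.Subgraph} (hsp : H.IsSpanning)
    (hcomp : ∀ c : H.coe.ConnectedComponent,
      Nonempty ((H.coe.induce c.supp) ≃g pathGraph 2) ∨
      Nonempty ((H.coe.induce c.supp) ≃g pathGraph 3))
    (S : Finset V) :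
    isolatedCount (G.induce ((↑S : Set V)ᶜ)) ≤ 2 * S.card := by
  classical
  have hclsupp : ∀ (c : H.coe.ConnectedComponent), ∀ a ∈ c.supp, ∀ b,
      H.coe.Adj a b → b ∈ c.supp := by
    intro c a ha b hab
    rw [ConnectedComponent.mem_supp_iff] at ha ⊢
    rw [← ha]
    exact ConnectedComponent.eq.2 hab.symm.reachable
  -- every vertex has an H-neighbour
  have hnbr : ∀ v : V, ∃ u : V, H.Adj v u := by
    intro v
    have hvsupp : (⟨v, hsp v⟩ : ↥H.verts) ∈ (H.coe.connectedComponentMk ⟨v, hsp v⟩).supp := by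
      rw [ConnectedComponent.mem_supp_iff]
    have key : ∀ (n : ℕ), n = 2 ∨ n = 3 →
        ((H.coe.induce (H.coe.connectedComponentMk ⟨v, hsp v⟩).supp) ≃g pathGraph n) →
        ∃ u : V, H.Adj v u := by
      intro n hn φ
      obtain ⟨j, hj⟩ := path_nbr n hn (φ ⟨⟨v, hsp v⟩, hvsupp⟩)
      have h2 : (pathGraph n).Adj (φ ⟨⟨v, hsp v⟩, hvsupp⟩) (φ (φ.symm j)) := by
        rwa [RelIso.apply_symm_apply]
      have h3 := φ.map_rel_iff.1 h2
      have h4 : H.coe.Adj ⟨v, hsp v⟩ ↑(φ.symm j) := by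
        simpa [comap_adj] using h3
      exact ⟨((φ.symm j : ↥(H.coe.connectedComponentMk ⟨v, hsp v⟩).supp) : ↥H.verts), by
        simpa [Subgraph.coe_adj] using h4⟩
    rcases hcomp (H.coe.connectedComponentMk ⟨v, hsp v⟩) with h | h
    · obtain ⟨φ⟩ := h; exact key 2 (Or.inl rfl) φ
    · obtain ⟨φ⟩ := h; exact key 3 (Or.inr rfl) φ
  -- degree bound
  have hdeg : ∀ s : V, (univ.filter (fun u => H.Adj s u)).card ≤ 2 := by
    intro s
    have hssupp : (⟨s, hsp s⟩ : ↥H.verts) ∈ (H.coe.connectedComponentMk ⟨s, hsp s⟩).supp := by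
      rw [ConnectedComponent.mem_supp_iff]
    have key : ∀ (n : ℕ), n = 2 ∨ n = 3 →
        ((H.coe.induce (H.coe.connectedComponentMk ⟨s, hsp s⟩).supp) ≃g pathGraph n) →
        (univ.filter (fun u => H.Adj s u)).card ≤ 2 := by
      intro n hn φ
      set c := H.coe.connectedComponentMk ⟨s, hsp s⟩ with hc
      set i0 := φ ⟨⟨s, hsp s⟩, hssupp⟩ with hi0
      have hmem : ∀ (u : {u : V // H.Adj s u}), (⟨↑u, hsp ↑u⟩ : ↥H.verts) ∈ c.supp := by
        intro u
        exact hclsupp c ⟨s, hsp s⟩ hssupp ⟨↑u, hsp ↑u⟩ (by simpa [Subgraph.coe_adj] using u.2)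
      have hadjmap : ∀ (u : {u : V // H.Adj s u}),
          (pathGraph n).Adj i0 (φ ⟨⟨↑u, hsp ↑u⟩, hmem u⟩) := by
        intro u
        apply φ.map_rel_iff.2
        simp only [comap_adj, Function.Embedding.coe_subtype]
        simpa [Subgraph.coe_adj] using u.2
      have hinj : Function.Injective
          (fun u : {u : V // H.Adj s u} =>
            (⟨φ ⟨⟨↑u, hsp ↑u⟩, hmem u⟩, hadjmap u⟩ : {j : Fin n // (pathGraph n).Adj i0 j})) := by
        intro u1 u2 h
        rw [Subtype.ext_iff] at h
        have := φ.injective h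
        rw [Subtype.ext_iff, Subtype.ext_iff] at this
        exact Subtype.ext this
      have hcard := Fintype.card_le_of_injective _ hinj
      have h1 : (univ.filter (fun u => H.Adj s u)).card = Fintype.card {u : V // H.Adj s u} :=
        (Fintype.card_subtype _).symm
      have h2 : Fintype.card {j : Fin n // (pathGraph n).Adj i0 j} ≤ 2 := by
        rw [← Nat.card_eq_fintype_card]
        exact path_card n hn i0
      omega
    rcases hcomp (H.coe.connectedComponentMk ⟨s, hsp s⟩) with h | h
    · obtain ⟨φ⟩ := h; exact key 2 (Or.inl rfl) φ
    · obtain ⟨φ⟩ := h; exact key 3 (Or.inr rfl) φ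
  -- main counting
  set X := {v : ↥((↑S : Set V)ᶜ) | ∀ w, ¬ (G.induce ((↑S : Set V)ᶜ)).Adj v w} with hX
  haveI : Fintype ↥X := Fintype.ofFinite _
  have hIC : isolatedCount (G.induce ((↑S : Set V)ᶜ)) = Fintype.card ↥X := by
    rw [isolatedCount, Nat.card_eq_fintype_card]
  rw [hIC]
  choose nb hnb using hnbr
  have hmapsto : ∀ x : ↥X, nb ↑(↑x : ↥((↑S : Set V)ᶜ)) ∈ S := by
    intro x
    by_contra hns
    have hmem : (nb ↑(↑x : ↥((↑S : Set V)ᶜ)) : V) ∈ ((↑S : Set V)ᶜ) := by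
      simpa using hns
    apply x.2 ⟨_, hmem⟩
    simp only [comap_adj, Function.Embedding.coe_subtype]
    exact (hnb _).adj_sub
  have hsum := Finset.card_eq_sum_card_fiberwise
    (f := fun x : ↥X => nb ↑(↑x : ↥((↑S : Set V)ᶜ))) (s := univ) (t := S)
    (fun x _ => hmapsto x)
  have hfib : ∀ s ∈ S,
      (univ.filter (fun x : ↥X => nb ↑(↑x : ↥((↑S : Set V)ᶜ)) = s)).card ≤ 2 := by
    intro s hs
    refine le_trans (Finset.card_le_card_of_injOn
      (fun x => ↑(↑x : ↥((↑S : Set V)ᶜ))) ?_ ?_) (hdeg s)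
    · intro x hx
      rw [Finset.mem_coe, Finset.mem_filter] at hx
      rw [Finset.mem_coe, Finset.mem_filter]
      refine ⟨Finset.mem_univ _, ?_⟩
      have := hnb (↑(↑x : ↥((↑S : Set V)ᶜ)) : V)
      rw [hx.2] at this
      exact this.symm
    · intro x _ y _ hxy
      exact Subtype.ext (Subtype.ext hxy)
  calc Fintype.card ↥X = (univ : Finset ↥X).card := Finset.card_univ.symm
    _ = ∑ s ∈ S, (univ.filter
        (fun x : ↥X => nb ↑(↑x : ↥((↑S : Set V)ᶜ)) = s)).card := hsum
    _ ≤ ∑ _s ∈ S, 2 := Finset.sum_le_sum hfib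
    _ = 2 * S.card := by rw [Finset.sum_const, smul_eq_mul, mul_comm]

/-- bridge from the isolated-count hypothesis to the combinatorial hypothesis -/
lemma bridge (hiso : ∀ S : Finset V, isolatedCount (G.induce ((↑S : Set V)ᶜ)) ≤ 2 * S.card) :
    ∀ S T : Finset V, (∀ t ∈ T, t ∉ S ∧ ∀ y, G.Adj t y → y ∈ S) → T.card ≤ 2 * S.card := by
  classical
  intro S T hTS
  refine le_trans ?_ (hiso S)
  set X := {v : ↥((↑S : Set V)ᶜ) | ∀ w, ¬ (G.induce ((↑S : Set V)ᶜ)).Adj v w} with hX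
  haveI : Fintype ↥X := Fintype.ofFinite _
  have hIC : isolatedCount (G.induce ((↑S : Set V)ᶜ)) = Fintype.card ↥X := by
    rw [isolatedCount, Nat.card_eq_fintype_card]
  rw [hIC, ← Fintype.card_coe T]
  have hcompl : ∀ t ∈ T, (t : V) ∈ ((↑S : Set V)ᶜ) := by
    intro t ht
    simpa using (hTS t ht).1
  have hisol : ∀ (t) (ht : t ∈ T), (⟨t, hcompl t ht⟩ : ↥((↑S : Set V)ᶜ)) ∈ X := by
    intro t ht
    intro w hadj
    simp only [comap_adj, Function.Embedding.coe_subtype] at hadj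
    have := (hTS t ht).2 ↑w hadj
    have hw := w.2
    simp only [Set.mem_compl_iff, Finset.mem_coe] at hw
    exact hw this
  apply Fintype.card_le_of_injective
    (fun t : ↥T => (⟨⟨↑t, hcompl ↑t t.2⟩, hisol ↑t t.2⟩ : ↥X))
  intro t1 t2 h
  rw [Subtype.ext_iff, Subtype.ext_iff] at h
  exact Subtype.ext h

end AJE

/-- Akiyama–Jin–Era theorem: `G` has a `{P₂, P₃}`-factor iff
`i(G - S) ≤ 2|S|` for all vertex subsets `S`. -/
theorem akiyama_jin_era {V : Type*} [Fintype V] [DecidableEq V] (G : SimpleGraph V) :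
    (∃ H : G.Subgraph, H.IsSpanning ∧
        ∀ c : H.coe.ConnectedComponent,
          Nonempty ((H.coe.induce c.supp) ≃g pathGraph 2) ∨
          Nonempty ((H.coe.induce c.supp) ≃g pathGraph 3)) ↔
      ∀ S : Finset V, isolatedCount (G.induce ((↑S : Set V)ᶜ)) ≤ 2 * S.card := by
  constructor
  · rintro ⟨H, hsp, hcomp⟩ S
    exact AJE.forward hsp hcomp S
  · intro hiso
    obtain ⟨f, hF, hcov⟩ := AJE.cover_all (AJE.bridge hiso)
    exact AJE.exists_factor hF hcov
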